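/- The rationals ℚ with their usual order are not sub-representable. -/

import Mathlib

def SubRepresentable (α : Type*) [PartialOrder α] : Prop :=
  ∃ g : Set α → Set α,
    (∀ P₁ P₂ : Set α, Nonempty (↥P₁ ↪o ↥P₂) ↔ g P₁ ⊆ g P₂) ∧
    ∀ P₁ : Set α, Nonempty (↥P₁ ↪o ↥(g P₁)) ∧ Nonempty (↥(g P₁) ↪o ↥P₁)

open Cardinal Ordinal Set

universe u

/-- An order embedding of `o.ToType` into `ℚ` for countable `o`. -/
noncomputable def ratEmb (o : Ordinal) (h : o.card ≤ Cardinal.aleph0) : o.ToType ↪o ℚ := by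
  have : Countable o.ToType := by
    rw [← Cardinal.mk_le_aleph0_iff, Cardinal.mk_toType]
    exact h
  exact Classical.choice (Order.embedding_from_countable_to_dense o.ToType ℚ)

/-- A subset of `ℚ` of order type `o`, for countable `o`. -/
noncomputable def ratCopy (o : Ordinal) (h : o.card ≤ Cardinal.aleph0) : Set ℚ :=
  Set.range (ratEmb o h)

noncomputable def ratCopyIso (o : Ordinal) (h : o.card ≤ Cardinal.aleph0) :
    o.ToType ≃o ↥(ratCopy o h) :=
  (ratEmb o h).strictMono.orderIso _

/-- For `a ≤ b`, an order embedding of `a.ToType` into `b.ToType`. -/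
noncomputable def toTypeEmb {a b : Ordinal.{u}} (h : a ≤ b) : a.ToType ↪o b.ToType := by
  haveI ia : IsWellOrder a.ToType (· < ·) := isWellOrder_lt
  haveI ib : IsWellOrder b.ToType (· < ·) := isWellOrder_lt
  have h' : type ((· < ·) : a.ToType → a.ToType → Prop)
      ≤ type ((· < ·) : b.ToType → b.ToType → Prop) := by
    rwa [type_toType, type_toType]
  exact (Classical.choice (Ordinal.type_le_iff.mp h')).toRelEmbedding.orderEmbeddingOfLTEmbedding

theorem le_of_toType_emb {a b : Ordinal.{u}} (f : b.ToType ↪o a.ToType) : b ≤ a := by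
  haveI ia : IsWellOrder a.ToType (· < ·) := isWellOrder_lt
  haveI ib : IsWellOrder b.ToType (· < ·) := isWellOrder_lt
  have := f.ltEmbedding.ordinal_type_le
  rwa [type_toType, type_toType] at this

/-- For `a ≤ b` countable, `↥(ratCopy a _)` embeds into `↥(ratCopy b _)`. -/
noncomputable def ratCopyEmb {a b : Ordinal} (ha : a.card ≤ Cardinal.aleph0)
    (hb : b.card ≤ Cardinal.aleph0) (h : a ≤ b) : ↥(ratCopy a ha) ↪o ↥(ratCopy b hb) :=
  ((ratCopyIso a ha).symm.toOrderEmbedding.trans (toTypeEmb h)).trans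
    (ratCopyIso b hb).toOrderEmbedding

theorem le_of_ratCopy_emb {a b : Ordinal} (ha : a.card ≤ Cardinal.aleph0)
    (hb : b.card ≤ Cardinal.aleph0) (f : ↥(ratCopy b hb) ↪o ↥(ratCopy a ha)) : b ≤ a :=
  le_of_toType_emb (((ratCopyIso b hb).toOrderEmbedding.trans f).trans
    (ratCopyIso a ha).symm.toOrderEmbedding)

theorem rat_not_subrep : ¬ SubRepresentable ℚ := by
  rintro ⟨g, hg, -⟩
  -- ordinals below `ω₁` are countable
  have hΩlim : Order.IsSuccLimit ((Cardinal.aleph 1).ord) := Cardinal.isSuccLimit_ord (aleph0_le_aleph 1)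
  have hc : ∀ o : Ordinal.{0}, o < (Cardinal.aleph 1).ord → o.card ≤ Cardinal.aleph0 := by
    intro o ho
    rw [Cardinal.lt_ord] at ho
    rw [← Cardinal.succ_aleph0, Order.lt_succ_iff] at ho
    exact ho
  -- the images under `g` are strictly monotone in `⊆`
  have hmono : ∀ (a b : Ordinal.{0}) (ha : a < (Cardinal.aleph 1).ord)
      (hb : b < (Cardinal.aleph 1).ord), a ≤ b →
      g (ratCopy a (hc a ha)) ⊆ g (ratCopy b (hc b hb)) := by
    intro a b ha hb hab
    exact (hg _ _).mp ⟨ratCopyEmb _ _ hab⟩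
  have hstrict : ∀ (a b : Ordinal.{0}) (ha : a < (Cardinal.aleph 1).ord)
      (hb : b < (Cardinal.aleph 1).ord), a < b →
      ∃ q : ℚ, q ∈ g (ratCopy b (hc b hb)) ∧ q ∉ g (ratCopy a (hc a ha)) := by
    intro a b ha hb hab
    by_contra hcon
    push_neg at hcon
    have hsub : g (ratCopy b (hc b hb)) ⊆ g (ratCopy a (hc a ha)) := fun q hq => hcon q hq
    obtain ⟨f⟩ := (hg _ _).mpr hsub
    exact absurd (le_of_ratCopy_emb _ _ f) (not_le.mpr hab)
  -- pick a witness for each countable ordinal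
  have hpick : ∀ (o : Ordinal.{0}) (ho : o < (Cardinal.aleph 1).ord),
      ∃ q : ℚ, q ∈ g (ratCopy (Order.succ o) (hc _ (hΩlim.succ_lt ho))) ∧
        q ∉ g (ratCopy o (hc o ho)) := by
    intro o ho
    exact hstrict o (Order.succ o) ho (hΩlim.succ_lt ho) (Order.lt_succ o)
  choose x hx1 hx2 using hpick
  -- `x` is injective on ordinals below `ω₁`
  have hxinj : ∀ (a b : Ordinal.{0}) (ha : a < (Cardinal.aleph 1).ord)
      (hb : b < (Cardinal.aleph 1).ord), a < b → x a ha ≠ x b hb := by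
    intro a b ha hb hab heq
    have h1 : x a ha ∈ g (ratCopy b (hc b hb)) :=
      hmono (Order.succ a) b (hΩlim.succ_lt ha) hb (Order.succ_le_of_lt hab) (hx1 a ha)
    rw [heq] at h1
    exact hx2 b hb h1
  -- build an injection from `ω₁.ToType` into `ℚ`
  have hfinj : Function.Injective (fun i : ((Cardinal.aleph 1).ord).ToType =>
      x (@typein ((Cardinal.aleph 1).ord).ToType (· < ·) isWellOrder_lt i) (Ordinal.typein_lt_self i)) := by
    intro i j hij
    dsimp only at hij
    by_contra hne
    have htne : @typein ((Cardinal.aleph 1).ord).ToType (· < ·) isWellOrder_lt i ≠ @typein ((Cardinal.aleph 1).ord).ToType (· < ·) isWellOrder_lt j :=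
      fun h => hne (@Ordinal.typein_injective ((Cardinal.aleph 1).ord).ToType (· < ·) isWellOrder_lt _ _ h)
    rcases htne.lt_or_gt with h | h
    · exact hxinj _ _ (Ordinal.typein_lt_self i) (Ordinal.typein_lt_self j) h hij
    · exact hxinj _ _ (Ordinal.typein_lt_self j) (Ordinal.typein_lt_self i) h hij.symm
  have hcard : #((Cardinal.aleph 1).ord).ToType ≤ #ℚ := Cardinal.mk_le_of_injective hfinj
  rw [Cardinal.mk_toType, Cardinal.card_ord, Cardinal.mkRat] at hcard
  exact absurd hcard (not_le.mpr Cardinal.aleph0_lt_aleph_one)
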